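/- Let ω : [0,∞) → [0,∞) be nondecreasing with ω(0) = 0, let Θ : ℝ² → ℝ be continuously differentiable with |Θ(x) − Θ(y)| ≤ ω(|x−y|) for all x, y, and suppose x ≠ y are points with Θ(x) − Θ(y) = ω(ξ) where ξ = |x−y| > 0. If ω is differentiable at ξ, then for all vectors u, v ∈ ℝ²: | u·∇Θ(x) − v·∇Θ(y) | ≤ ω'(ξ) |u − v|. -/

import Mathlib

open Real

noncomputable section

abbrev Plane := EuclideanSpace ℝ (Fin 2)

/-- If a nondecreasing modulus of continuity `ω` with `ω(0) = 0` for a `C¹` function `Θ`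
is exactly attained at distinct points `x, y` with `ξ = |x−y|`, and `ω` is differentiable
at `ξ` with derivative `ω'`, then `|u·∇Θ(x) − v·∇Θ(y)| ≤ ω'(ξ)|u−v|` for all `u, v ∈ ℝ²`. -/
theorem transport_term_estimate (ω : ℝ → ℝ)
    (hmono : MonotoneOn ω (Set.Ici 0)) (h0 : ω 0 = 0)
    (hnonneg : ∀ ξ ≥ (0:ℝ), 0 ≤ ω ξ)
    (Θ : Plane → ℝ) (hΘ : ContDiff ℝ 1 Θ)
    (hmod : ∀ x y : Plane, |Θ x - Θ y| ≤ ω ‖x - y‖)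
    (x y : Plane) (hxy : x ≠ y) (ξ : ℝ) (hξ : ξ = ‖x - y‖)
    (heq : Θ x - Θ y = ω ξ)
    (ω' : ℝ) (hder : HasDerivAt ω ω' ξ) :
    ∀ u v : Plane, |fderiv ℝ Θ x u - fderiv ℝ Θ y v| ≤ ω' * ‖u - v‖ := by
  intro u v
  have hξpos : 0 < ξ := by
    rw [hξ]; exact norm_sub_pos_iff.mpr hxy
  set c : ℝ := ‖u - v‖ with hc
  have hcnonneg : 0 ≤ c := norm_nonneg _
  set D : ℝ := fderiv ℝ Θ x u - fderiv ℝ Θ y v with hD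
  set f : ℝ → ℝ := fun t => Θ (x + t • u) - Θ (y + t • v) with hf
  have hdiff := hΘ.differentiable one_ne_zero
  -- f has derivative D at 0
  have hfx : HasDerivAt (fun t : ℝ => Θ (x + t • u)) (fderiv ℝ Θ x u) 0 := by
    have h1 : HasDerivAt (fun t : ℝ => x + t • u) u 0 := by
      simpa using ((hasDerivAt_id (0:ℝ)).smul_const u).const_add x
    have h2 : HasFDerivAt Θ (fderiv ℝ Θ x) (x + (0:ℝ) • u) := by
      simpa using (hdiff x).hasFDerivAt
    simpa [Function.comp_def] using h2.comp_hasDerivAt 0 h1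
  have hfy : HasDerivAt (fun t : ℝ => Θ (y + t • v)) (fderiv ℝ Θ y v) 0 := by
    have h1 : HasDerivAt (fun t : ℝ => y + t • v) v 0 := by
      simpa using ((hasDerivAt_id (0:ℝ)).smul_const v).const_add y
    have h2 : HasFDerivAt Θ (fderiv ℝ Θ y) (y + (0:ℝ) • v) := by
      simpa using (hdiff y).hasFDerivAt
    simpa [Function.comp_def] using h2.comp_hasDerivAt 0 h1
  have hfD : HasDerivAt f D 0 := hfx.sub hfy
  have hf0 : f 0 = ω ξ := by simp [hf, heq]
  -- key inequality
  have hkey : ∀ t : ℝ, f t ≤ ω (ξ + |t| * c) := by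
    intro t
    have hle : ‖(x + t • u) - (y + t • v)‖ ≤ ξ + |t| * c := by
      have heq2 : (x + t • u) - (y + t • v) = (x - y) + t • (u - v) := by
        simp [smul_sub]; abel
      rw [heq2]
      calc ‖(x - y) + t • (u - v)‖ ≤ ‖x - y‖ + ‖t • (u - v)‖ := norm_add_le _ _
        _ = ξ + |t| * c := by rw [hξ, norm_smul, Real.norm_eq_abs]
    calc f t ≤ |Θ (x + t • u) - Θ (y + t • v)| := le_abs_self _
      _ ≤ ω ‖(x + t • u) - (y + t • v)‖ := hmod _ _
      _ ≤ ω (ξ + |t| * c) := hmono (Set.mem_Ici.mpr (norm_nonneg _)) (Set.mem_Ici.mpr (by positivity)) hle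
  have hfslope := hasDerivAt_iff_tendsto_slope.mp hfD
  have hfslope_r : Filter.Tendsto (slope f 0) (nhdsWithin 0 (Set.Ioi 0)) (nhds D) :=
    hfslope.mono_left (nhdsWithin_mono _ (fun t ht => ne_of_gt ht))
  have hfslope_l : Filter.Tendsto (slope f 0) (nhdsWithin 0 (Set.Iio 0)) (nhds D) :=
    hfslope.mono_left (nhdsWithin_mono _ (fun t ht => ne_of_lt ht))
  have upper : D ≤ ω' * c := by
    have hgplus : HasDerivAt (fun t : ℝ => ω (ξ + t * c)) (ω' * c) 0 := by
      have h1 : HasDerivAt (fun t : ℝ => ξ + t * c) c 0 := by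
        simpa using ((hasDerivAt_id (0:ℝ)).mul_const c).const_add ξ
      have hder' : HasDerivAt ω ω' ((fun t : ℝ => ξ + t * c) 0) := by simpa using hder
      simpa [Function.comp_def] using hder'.comp 0 h1
    have hgslope := hasDerivAt_iff_tendsto_slope.mp hgplus
    have hgslope_r : Filter.Tendsto (slope (fun t : ℝ => ω (ξ + t * c)) 0)
        (nhdsWithin 0 (Set.Ioi 0)) (nhds (ω' * c)) :=
      hgslope.mono_left (nhdsWithin_mono _ (fun t ht => ne_of_gt ht))
    refine le_of_tendsto_of_tendsto hfslope_r hgslope_r ?_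
    filter_upwards [self_mem_nhdsWithin] with t ht
    have htpos : (0:ℝ) < t := ht
    have h1 : f t - f 0 ≤ ω (ξ + t * c) - ω (ξ + 0 * c) := by
      have := hkey t
      rw [abs_of_pos htpos] at this
      simp only [zero_mul, add_zero]
      rw [hf0]; linarith
    rw [slope_def_field, slope_def_field, sub_zero]
    gcongr
  have lower : -(ω' * c) ≤ D := by
    have hgminus : HasDerivAt (fun t : ℝ => ω (ξ - t * c)) (-(ω' * c)) 0 := by
      have h1 : HasDerivAt (fun t : ℝ => ξ - t * c) (-c) 0 := by
        simpa using ((hasDerivAt_id (0:ℝ)).mul_const c).const_sub ξ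
      have hder' : HasDerivAt ω ω' ((fun t : ℝ => ξ - t * c) 0) := by simpa using hder
      have := hder'.comp 0 h1
      simpa [mul_comm, Function.comp_def] using this
    have hgslope := hasDerivAt_iff_tendsto_slope.mp hgminus
    have hgslope_l : Filter.Tendsto (slope (fun t : ℝ => ω (ξ - t * c)) 0)
        (nhdsWithin 0 (Set.Iio 0)) (nhds (-(ω' * c))) :=
      hgslope.mono_left (nhdsWithin_mono _ (fun t ht => ne_of_lt ht))
    refine le_of_tendsto_of_tendsto hgslope_l hfslope_l ?_
    filter_upwards [self_mem_nhdsWithin] with t ht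
    have htneg : t < (0:ℝ) := ht
    have h1 : f t - f 0 ≤ ω (ξ - t * c) - ω (ξ - 0 * c) := by
      have := hkey t
      rw [abs_of_neg htneg] at this
      simp only [zero_mul, sub_zero]
      rw [hf0]
      have h2 : f t ≤ ω (ξ - t * c) := by simpa [sub_eq_add_neg] using this
      linarith
    rw [slope_def_field, slope_def_field, sub_zero]
    rw [div_eq_mul_inv, div_eq_mul_inv]
    exact mul_le_mul_of_nonpos_right h1 (le_of_lt (inv_neg''.mpr htneg))
  rw [hD] at upper lower ⊢
  exact abs_le.mpr ⟨lower, upper⟩
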